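/- Let γ be a homogeneous geodesic in a complete Riemannian manifold (M,g), i.e. γ(t) = exp(tU)(x) for some one-parameter isometry group. If the image γ(ℝ) is unbounded in M, then γ(ℝ) is a closed subset of M. -/
import Mathlib

open Filter Topology Metric Set

/-- A homogeneous geodesic `γ(t) = exp(tU)·x` (an orbit of a one-parameter isometry group)
in a complete Riemannian manifold — modeled as a proper metric space `M` — is a closed
subset of `M` if its image is unbounded. -/
theorem stmt_16 {M : Type*} [MetricSpace M] [ProperSpace M]
    (φ : ℝ → M ≃ᵢ M) (hflow : ∀ s t : ℝ, φ (s + t) = (φ t).trans (φ s))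
    (hcont : Continuous fun p : ℝ × M => φ p.1 p.2)
    (x : M) (γ : ℝ → M) (hγ : ∀ t, γ t = φ t x)
    (hunbounded : ¬ Bornology.IsBounded (Set.range γ)) :
    IsClosed (Set.range γ) := by
  classical
  -- flow composition
  have hcomp : ∀ s t : ℝ, ∀ z : M, φ (s + t) z = φ s (φ t z) := by
    intro s t z
    have h := congrArg (fun e : M ≃ᵢ M => e z) (hflow s t)
    simpa using h
  have hφ0 : ∀ z : M, φ 0 z = z := by
    intro z
    have h : φ 0 z = φ 0 (φ 0 z) := by
      have h := hcomp 0 0 z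
      rwa [add_zero] at h
    exact ((φ 0).injective h.symm)
  have hγ0 : γ 0 = x := by rw [hγ, hφ0]
  set f : ℝ → ℝ := fun t => dist (γ t) x with hf
  have hf0 : f 0 = 0 := by simp [hf, hγ0]
  have hdist : ∀ a b : ℝ, dist (γ a) (γ b) = f (a - b) := by
    intro a b
    have h1 : γ a = φ b (γ (a - b)) := by
      rw [hγ a, hγ (a - b), ← hcomp, show b + (a - b) = a from by ring]
    calc dist (γ a) (γ b) = dist (φ b (γ (a - b))) (φ b x) := by rw [h1, hγ b]
      _ = dist (γ (a - b)) x := (φ b).dist_eq _ _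
  have feven : ∀ t : ℝ, f (-t) = f t := by
    intro t
    have h := hdist 0 t
    rw [hγ0, zero_sub] at h
    rw [← h, dist_comm]
  have fsub : ∀ a b : ℝ, f (a + b) ≤ f a + f b := by
    intro a b
    have h := dist_triangle (γ (a + b)) (γ b) x
    rwa [hdist (a + b) b, add_sub_cancel_right] at h
  have hγc : Continuous γ := by
    have h : Continuous fun t : ℝ => φ t x :=
      hcont.comp (continuous_id.prodMk continuous_const)
    have hfun : γ = fun t => φ t x := funext hγ
    rwa [hfun]
  have fcont : Continuous f := hγc.dist continuous_const
  -- unboundedness of f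
  have hub : ∀ C : ℝ, ∃ t, C < f t := by
    intro C
    by_contra h
    push_neg at h
    apply hunbounded
    apply (isBounded_closedBall (x := x) (r := C)).subset
    rintro _ ⟨t, rfl⟩
    exact mem_closedBall.mpr (h t)
  -- bound on compacts
  have fbdd : ∀ G : ℝ, ∃ S, ∀ r, 0 ≤ r → r ≤ G → f r ≤ S := by
    intro G
    obtain ⟨S, hS⟩ := (isCompact_Icc (a := (0:ℝ)) (b := G)).bddAbove_image fcont.continuousOn
    exact ⟨S, fun r h0 hG => hS ⟨r, ⟨h0, hG⟩, rfl⟩⟩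
  -- gap construction
  have gap : ∀ G : ℝ, 0 < G →
      ∃ a, 0 ≤ a ∧ f a ≤ 1 ∧ ∀ u, a < u → u ≤ a + G → 1 < f u := by
    intro G hG
    by_cases hcase : ∃ t₀, 0 ≤ t₀ ∧ ∀ u, t₀ ≤ u → u ≤ t₀ + G → 1 < f u
    · obtain ⟨t₀, ht₀, hgap⟩ := hcase
      set s : Set ℝ := Iic t₀ ∩ f ⁻¹' Iic 1 with hs
      have h0mem : (0:ℝ) ∈ s := ⟨ht₀, by simp [hf0]⟩
      have hSne : s.Nonempty := ⟨0, h0mem⟩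
      have hSbdd : BddAbove s := ⟨t₀, fun u hu => hu.1⟩
      have hSclosed : IsClosed s := isClosed_Iic.inter (isClosed_Iic.preimage fcont)
      have hmem := hSclosed.csSup_mem hSne hSbdd
      refine ⟨sSup s, le_csSup hSbdd h0mem, hmem.2, ?_⟩
      intro u hu1 hu2
      by_cases hut : u ≤ t₀
      · by_contra hle
        push_neg at hle
        exact absurd (le_csSup hSbdd ⟨hut, hle⟩) (not_le.mpr hu1)
      · have ha_le : sSup s ≤ t₀ := hmem.1
        exact hgap u (le_of_lt (lt_of_not_ge hut)) (by linarith)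
    · push_neg at hcase
      exfalso
      obtain ⟨S, hS⟩ := fbdd G
      have hbound : ∀ t, f t ≤ 1 + max S 0 := by
        have hpos : ∀ t, 0 ≤ t → f t ≤ 1 + max S 0 := by
          intro t ht
          obtain ⟨u, htu, huG, hfu⟩ := hcase t ht
          have heq : u + (t - u) = t := by ring
          have h1 : f t ≤ f u + f (t - u) := by
            have := fsub u (t - u)
            rwa [heq] at this
          have h2 : f (t - u) = f (u - t) := by
            rw [show t - u = -(u - t) from by ring, feven]
          have h3 : f (u - t) ≤ S := hS (u - t) (by linarith) (by linarith)
          have h4 : S ≤ max S 0 := le_max_left _ _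
          linarith
        intro t
        rcases le_or_gt 0 t with h | h
        · exact hpos t h
        · have h1 := hpos (-t) (by linarith)
          rwa [feven] at h1
      obtain ⟨t, ht⟩ := hub (1 + max S 0)
      exact absurd (hbound t) (not_le.mpr ht)
  -- the key lemma: no recurrence
  have notREC : ∃ ε : ℝ, 0 < ε ∧ ∃ T : ℝ, ∀ s, T ≤ s → ε ≤ f s := by
    by_contra hREC
    push_neg at hREC
    choose a ha0 ha1 hagap using fun n : ℕ => gap ((n : ℝ) + 1) (by positivity)
    have hmem : ∀ n, γ (a n) ∈ closedBall x 1 := fun n => mem_closedBall.mpr (ha1 n)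
    obtain ⟨p, -, ψ, hψ, hconv⟩ := (isCompact_closedBall x 1).tendsto_subseq hmem
    obtain ⟨J, hJ⟩ := (Metric.tendsto_atTop.mp hconv) (1/8) (by norm_num)
    have hpair : ∀ j, J ≤ j → f (a (ψ j) - a (ψ J)) < 1/4 := by
      intro j hj
      have h1 : dist (γ (a (ψ j))) p < 1/8 := by simpa using hJ j hj
      have h2 : dist (γ (a (ψ J))) p < 1/8 := by simpa using hJ J le_rfl
      calc f (a (ψ j) - a (ψ J)) = dist (γ (a (ψ j))) (γ (a (ψ J))) := (hdist _ _).symm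
        _ ≤ dist (γ (a (ψ j))) p + dist p (γ (a (ψ J))) := dist_triangle _ _ _
        _ < 1/4 := by rw [dist_comm p]; linarith
    set A := a (ψ J) with hA
    have hext : ∀ t, A < t → (1:ℝ)/2 ≤ f t := by
      intro t ht
      set j := max J (Nat.ceil (t - A)) with hjdef
      have hjJ : J ≤ j := le_max_left _ _
      have hlen : t - A ≤ (ψ j : ℝ) + 1 := by
        have h1 : t - A ≤ (Nat.ceil (t - A) : ℝ) := Nat.le_ceil _
        have h2 : ((Nat.ceil (t - A) : ℕ) : ℝ) ≤ (j : ℝ) :=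
          Nat.cast_le.mpr (le_max_right _ _)
        have h3 : (j : ℝ) ≤ (ψ j : ℝ) := Nat.cast_le.mpr hψ.le_apply
        linarith
      have hgap' : 1 < f (t + (a (ψ j) - A)) := by
        apply hagap (ψ j) (t + (a (ψ j) - A)) (by linarith)
        linarith
      have hsub := fsub t (a (ψ j) - A)
      have hsmall := hpair j hjJ
      linarith
    obtain ⟨s, hs1, hs2⟩ := hREC (1/2) (by norm_num) (A + 1)
    exact absurd (hext s (by linarith)) (not_le.mpr hs2)
  -- closedness
  apply IsSeqClosed.isClosed
  intro u y hu huy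
  simp only [Set.mem_range] at hu
  choose t ht using hu
  have hty : Tendsto (fun n => γ (t n)) atTop (𝓝 y) := by
    have heq : (fun n => γ (t n)) = u := funext ht
    rwa [heq]
  by_cases hbdd : ∃ C : ℝ, ∀ N : ℕ, ∃ n, N ≤ n ∧ |t n| ≤ C
  · obtain ⟨C, hC⟩ := hbdd
    have hfreq : ∃ᶠ n in atTop, |t n| ≤ C := by
      rw [frequently_atTop]
      intro N
      obtain ⟨n, hn1, hn2⟩ := hC N
      exact ⟨n, hn1, hn2⟩
    obtain ⟨φ₁, hφ₁mono, hφ₁⟩ := Filter.extraction_of_frequently_atTop hfreq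
    have hmem : ∀ k, t (φ₁ k) ∈ Icc (-C) C := fun k => abs_le.mp (hφ₁ k)
    obtain ⟨t₀, -, ψ, hψmono, hconv⟩ := isCompact_Icc.tendsto_subseq hmem
    have h1 : Tendsto (fun k => γ (t (φ₁ (ψ k)))) atTop (𝓝 (γ t₀)) :=
      (hγc.tendsto t₀).comp hconv
    have h2 : Tendsto (fun k => γ (t (φ₁ (ψ k)))) atTop (𝓝 y) :=
      hty.comp ((hφ₁mono.comp hψmono).tendsto_atTop)
    exact ⟨t₀, tendsto_nhds_unique h1 h2⟩
  · push_neg at hbdd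
    exfalso
    obtain ⟨ε, hε, T, hT⟩ := notREC
    obtain ⟨N₀, hN₀⟩ := (Metric.tendsto_atTop.mp hty) (ε/2) (by positivity)
    obtain ⟨N₁, hN₁⟩ := hbdd (|t N₀| + |T| + 1)
    set m := max N₀ N₁ with hm
    have h1 : dist (γ (t m)) (γ (t N₀)) < ε := by
      have ha := hN₀ m (le_max_left _ _)
      have hb := hN₀ N₀ le_rfl
      calc dist (γ (t m)) (γ (t N₀)) ≤ dist (γ (t m)) y + dist y (γ (t N₀)) :=
            dist_triangle _ _ _
        _ < ε := by rw [dist_comm y]; linarith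
    have h2 : f (t m - t N₀) < ε := by rwa [hdist] at h1
    have h3 : T ≤ |t m - t N₀| := by
      have hc := hN₁ m (le_max_right _ _)
      have habs : |t m| - |t N₀| ≤ |t m - t N₀| := abs_sub_abs_le_abs_sub _ _
      have hd : T ≤ |T| := le_abs_self T
      linarith
    have h4 : f |t m - t N₀| < ε := by
      rcases abs_cases (t m - t N₀) with ⟨heq, -⟩ | ⟨heq, -⟩
      · rw [heq]; exact h2
      · rw [heq, feven]; exact h2
    exact absurd (hT _ h3) (not_le.mpr h4)
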